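/- Let n ≥ 1 be an integer, μ > 0 a real number, and for (z,w) ∈ M_{n,μ} set P(z) = ∏_{j=1}^n (1−|z_j|²)^μ and h(z,w) = (μ P(z)/(P(z)−|w|²)) · ∑_{j=1}^n |z_j|²/(1−|z_j|²) + |w|²/(P(z)−|w|²). Then for every point p in the topological frontier of M_{n,μ} in ℂ^{n+1}, the function h(z,w) tends to +∞ as (z,w) tends to p within M_{n,μ}. -/

import Mathlib

/-- `∏ j, (1 - |z j|²)^μ`. -/
noncomputable def prodP (n : ℕ) (μ : ℝ) (z : Fin n → ℂ) : ℝ :=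
  ∏ j, (1 - ‖z j‖ ^ 2) ^ μ

/-- The Hartogs–polydisc `M_{n,μ}`. -/
def hartogsPolydisc (n : ℕ) (μ : ℝ) : Set ((Fin n → ℂ) × ℂ) :=
  {p | (∀ j, ‖p.1 j‖ < 1) ∧ ‖p.2‖ ^ 2 < prodP n μ p.1}

/-- The boundary-divergence function `h`. -/
noncomputable def boundaryFun (n : ℕ) (μ : ℝ) (p : (Fin n → ℂ) × ℂ) : ℝ :=
  μ * prodP n μ p.1 / (prodP n μ p.1 - ‖p.2‖ ^ 2) *
      ∑ j, ‖p.1 j‖ ^ 2 / (1 - ‖p.1 j‖ ^ 2) +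
    ‖p.2‖ ^ 2 / (prodP n μ p.1 - ‖p.2‖ ^ 2)

open Filter Topology

lemma continuous_prodP (n : ℕ) {μ : ℝ} (hμ : 0 < μ) : Continuous (prodP n μ) := by
  unfold prodP
  exact continuous_finset_prod _ fun j _ =>
    ((continuous_const.sub ((continuous_norm.comp (continuous_apply j)).pow 2)).rpow_const
      (fun x => Or.inr hμ.le))

lemma prodP_pos {n : ℕ} {μ : ℝ} {z : Fin n → ℂ} (hz : ∀ j, ‖z j‖ < 1) :
    0 < prodP n μ z := by
  apply Finset.prod_pos
  intro j _
  apply Real.rpow_pos_of_pos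
  have h1 := hz j
  nlinarith [norm_nonneg (z j)]

lemma isOpen_hartogs (n : ℕ) {μ : ℝ} (hμ : 0 < μ) : IsOpen (hartogsPolydisc n μ) := by
  have h1 : hartogsPolydisc n μ =
      (⋂ j, {p : (Fin n → ℂ) × ℂ | ‖p.1 j‖ < 1}) ∩
        {p | ‖p.2‖ ^ 2 < prodP n μ p.1} := by
    ext q; simp only [hartogsPolydisc, Set.mem_setOf_eq, Set.mem_inter_iff, Set.mem_iInter]
  rw [h1]
  refine IsOpen.inter (isOpen_iInter_of_finite fun j => ?_) ?_
  · exact isOpen_lt (continuous_norm.comp ((continuous_apply j).comp continuous_fst))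
      continuous_const
  · exact isOpen_lt ((continuous_norm.comp continuous_snd).pow 2)
      ((continuous_prodP n hμ).comp continuous_fst)

lemma bounds_alg {P W S T μ : ℝ} (hμ : 0 < μ) (hP : 0 < P) (hW : 0 ≤ W) (hD : 0 < P - W)
    (hS : 0 ≤ S) (hTS : T ≤ S) :
    P / (P - W) ≤ (μ * P / (P - W) * S + W / (P - W)) + 1 ∧
    μ * T ≤ (μ * P / (P - W) * S + W / (P - W)) + 1 := by
  have hkey : (μ * P / (P - W) * S + W / (P - W)) + 1 = μ * P / (P - W) * S + P / (P - W) := by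
    field_simp
    ring
  have hPD1 : 1 ≤ P / (P - W) := (le_div_iff₀ hD).2 (by linarith)
  have h3 : 0 < P / (P - W) := by positivity
  constructor
  · rw [hkey]
    have : 0 ≤ μ * P / (P - W) * S := by positivity
    linarith
  · rw [hkey]
    have h1 : μ * S ≤ μ * P / (P - W) * S := by
      have hm : μ ≤ μ * P / (P - W) := by
        rw [mul_div_assoc]
        nlinarith
      exact mul_le_mul_of_nonneg_right hm hS
    have h2 : μ * T ≤ μ * S := mul_le_mul_of_nonneg_left hTS hμ.le
    linarith

lemma boundary_bounds {n : ℕ} {μ : ℝ} (hμ : 0 < μ) {q : (Fin n → ℂ) × ℂ}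
    (hq : q ∈ hartogsPolydisc n μ) :
    prodP n μ q.1 / (prodP n μ q.1 - ‖q.2‖ ^ 2) ≤ boundaryFun n μ q + 1 ∧
    ∀ j, μ * (‖q.1 j‖ ^ 2 / (1 - ‖q.1 j‖ ^ 2)) ≤ boundaryFun n μ q + 1 := by
  obtain ⟨hz, hw⟩ := hq
  have hP : 0 < prodP n μ q.1 := prodP_pos hz
  have hD : 0 < prodP n μ q.1 - ‖q.2‖ ^ 2 := sub_pos.2 hw
  have hW0 : 0 ≤ ‖q.2‖ ^ 2 := sq_nonneg _
  have hterm : ∀ j, 0 ≤ ‖q.1 j‖ ^ 2 / (1 - ‖q.1 j‖ ^ 2) := by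
    intro j
    have h1 := hz j
    have h2 : 0 < 1 - ‖q.1 j‖ ^ 2 := by nlinarith [norm_nonneg (q.1 j)]
    positivity
  have hS : 0 ≤ ∑ j, ‖q.1 j‖ ^ 2 / (1 - ‖q.1 j‖ ^ 2) :=
    Finset.sum_nonneg fun j _ => hterm j
  constructor
  · exact (bounds_alg hμ hP hW0 hD hS (le_refl _)).1
  · intro j
    have hSj : ‖q.1 j‖ ^ 2 / (1 - ‖q.1 j‖ ^ 2) ≤
        ∑ i, ‖q.1 i‖ ^ 2 / (1 - ‖q.1 i‖ ^ 2) :=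
      Finset.single_le_sum (fun i _ => hterm i) (Finset.mem_univ j)
    exact (bounds_alg hμ hP hW0 hD hS hSj).2

lemma tendsto_div_aux {α : Type*} {l : Filter α} {f g : α → ℝ} {c : ℝ} (hc : 0 < c)
    (hf : Tendsto f l (𝓝 c)) (hg : Tendsto g l (𝓝[>] 0)) :
    Tendsto (fun x => f x / g x) l atTop := by
  have h1 : Tendsto (fun x => (g x)⁻¹) l atTop := tendsto_inv_nhdsGT_zero.comp hg
  simpa only [div_eq_mul_inv] using Filter.Tendsto.pos_mul_atTop hc hf h1

theorem stmt_6 (n : ℕ) (hn : 1 ≤ n) (μ : ℝ) (hμ : 0 < μ)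
    (p : (Fin n → ℂ) × ℂ) (hp : p ∈ frontier (hartogsPolydisc n μ)) :
    Filter.Tendsto (boundaryFun n μ) (nhdsWithin p (hartogsPolydisc n μ)) Filter.atTop := by
  set M := hartogsPolydisc n μ with hM
  rw [(isOpen_hartogs n hμ).frontier_eq] at hp
  obtain ⟨hpc, hpm⟩ := hp
  have hne : (nhdsWithin p M).NeBot := mem_closure_iff_nhdsWithin_neBot.1 hpc
  have cP : Continuous fun q : (Fin n → ℂ) × ℂ => prodP n μ q.1 :=
    (continuous_prodP n hμ).comp continuous_fst
  have cW : Continuous fun q : (Fin n → ℂ) × ℂ => ‖q.2‖ ^ 2 :=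
    (continuous_norm.comp continuous_snd).pow 2
  have cD : Continuous fun q : (Fin n → ℂ) × ℂ => prodP n μ q.1 - ‖q.2‖ ^ 2 :=
    cP.sub cW
  -- Reduce to showing boundaryFun + 1 → atTop via a lower bound that diverges.
  suffices h : Tendsto (fun q => boundaryFun n μ q + 1) (nhdsWithin p M) atTop by
    have := tendsto_atTop_add_const_right (nhdsWithin p M) (-1) h
    simpa using this
  by_cases hz : ∀ j, ‖p.1 j‖ < 1
  · -- case |w|² = P(z) on the boundary
    have hW : ‖p.2‖ ^ 2 = prodP n μ p.1 := by
      have hle : 0 ≤ prodP n μ p.1 - ‖p.2‖ ^ 2 := by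
        refine ge_of_tendsto (cD.continuousAt.mono_left (nhdsWithin_le_nhds (s := M))) ?_
        filter_upwards [self_mem_nhdsWithin] with q hq
        exact (sub_pos.2 hq.2).le
      by_contra hne'
      exact hpm ⟨hz, lt_of_le_of_ne (by linarith) hne'⟩
    have hPpos : 0 < prodP n μ p.1 := prodP_pos hz
    have hDt : Tendsto (fun q : (Fin n → ℂ) × ℂ => prodP n μ q.1 - ‖q.2‖ ^ 2)
        (nhdsWithin p M) (𝓝[>] 0) := by
      rw [tendsto_nhdsWithin_iff]
      constructor
      · have := (cD.continuousAt (x := p)).mono_left (nhdsWithin_le_nhds (s := M))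
        simpa [hW] using this
      · filter_upwards [self_mem_nhdsWithin] with q hq
        exact sub_pos.2 hq.2
    have hPt : Tendsto (fun q : (Fin n → ℂ) × ℂ => prodP n μ q.1) (nhdsWithin p M)
        (𝓝 (prodP n μ p.1)) := cP.continuousAt.mono_left nhdsWithin_le_nhds
    have hdiv := tendsto_div_aux hPpos hPt hDt
    refine tendsto_atTop_mono' _ ?_ hdiv
    filter_upwards [self_mem_nhdsWithin] with q hq
    exact (boundary_bounds hμ hq).1
  · -- case some |z_j| = 1
    push_neg at hz
    obtain ⟨j, hj⟩ := hz
    have hle : ‖p.1 j‖ ≤ 1 := by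
      have h0 : 0 ≤ 1 - ‖p.1 j‖ ^ 2 := by
        have cZ : Continuous fun q : (Fin n → ℂ) × ℂ => 1 - ‖q.1 j‖ ^ 2 :=
          continuous_const.sub ((continuous_norm.comp
            ((continuous_apply j).comp continuous_fst)).pow 2)
        refine ge_of_tendsto (cZ.continuousAt.mono_left (nhdsWithin_le_nhds (s := M))) ?_
        filter_upwards [self_mem_nhdsWithin] with q hq
        have h1 := hq.1 j
        nlinarith [norm_nonneg (q.1 j)]
      nlinarith [norm_nonneg (p.1 j)]
    have heq : ‖p.1 j‖ = 1 := le_antisymm hle hj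
    have hNum : Tendsto (fun q : (Fin n → ℂ) × ℂ => μ * ‖q.1 j‖ ^ 2)
        (nhdsWithin p M) (𝓝 μ) := by
      have cN : Continuous fun q : (Fin n → ℂ) × ℂ => μ * ‖q.1 j‖ ^ 2 :=
        continuous_const.mul ((continuous_norm.comp
          ((continuous_apply j).comp continuous_fst)).pow 2)
      have := (cN.continuousAt (x := p)).mono_left (nhdsWithin_le_nhds (s := M))
      simpa [heq] using this
    have hDen : Tendsto (fun q : (Fin n → ℂ) × ℂ => 1 - ‖q.1 j‖ ^ 2)
        (nhdsWithin p M) (𝓝[>] 0) := by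
      rw [tendsto_nhdsWithin_iff]
      constructor
      · have cZ : Continuous fun q : (Fin n → ℂ) × ℂ => 1 - ‖q.1 j‖ ^ 2 :=
          continuous_const.sub ((continuous_norm.comp
            ((continuous_apply j).comp continuous_fst)).pow 2)
        have := (cZ.continuousAt (x := p)).mono_left (nhdsWithin_le_nhds (s := M))
        simpa [heq] using this
      · filter_upwards [self_mem_nhdsWithin] with q hq
        have h1 := hq.1 j
        have : 0 < 1 - ‖q.1 j‖ ^ 2 := by nlinarith [norm_nonneg (q.1 j)]
        exact this
    have hdiv := tendsto_div_aux hμ hNum hDen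
    refine tendsto_atTop_mono' _ ?_ hdiv
    filter_upwards [self_mem_nhdsWithin] with q hq
    have := (boundary_bounds hμ hq).2 j
    rw [mul_div_assoc]
    exact this
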